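/- Let (A,B,x,y) ∈ M_n(ℂ)⁴-data satisfy [A,A*] + [B,B*] + x x* − y* y = 0 and [A,B] + x y = 0 (the t = 0 moment map equations). Then x = 0, y = 0, [A,B] = 0, [A,A*] = 0, and [B,B*] = 0; in particular A and B are commuting normal matrices. -/

import Mathlib

open Matrix

noncomputable section Stmt1Aux

namespace Stmt1Aux

variable {n : ℕ}

/-! ### Small helpers -/

lemma tr11 (M : Matrix (Fin 1) (Fin 1) ℂ) : M.trace = M 0 0 := by
  simp [Matrix.trace, Matrix.diag]

lemma tr11_mul (M N : Matrix (Fin 1) (Fin 1) ℂ) : (M * N).trace = M.trace * N.trace := by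
  simp [tr11, Matrix.mul_apply]

lemma eq0_of_tr11 (M : Matrix (Fin 1) (Fin 1) ℂ) (h : M.trace = 0) : M = 0 := by
  rw [tr11] at h
  ext i j
  fin_cases i <;> fin_cases j <;> simpa using h

lemma trace_conj_mul' {m k : Type*} [Fintype m] [Fintype k] (M : Matrix m k ℂ) :
    (Mᴴ * M).trace = ((∑ i : m, ∑ j : k, Complex.normSq (M i j) : ℝ) : ℂ) := by
  rw [Matrix.trace]
  push_cast
  rw [Finset.sum_comm]
  refine Finset.sum_congr rfl fun j _ => ?_
  simp only [Matrix.diag, Matrix.mul_apply, Matrix.conjTranspose_apply]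
  refine Finset.sum_congr rfl fun i _ => ?_
  rw [Complex.normSq_eq_conj_mul_self]
  rfl

lemma trace_conj_nonneg {m k : Type*} [Fintype m] [Fintype k] (M : Matrix m k ℂ) :
    (0:ℝ) ≤ ∑ i : m, ∑ j : k, Complex.normSq (M i j) :=
  Finset.sum_nonneg fun i _ => Finset.sum_nonneg fun j _ => Complex.normSq_nonneg _

lemma eq0_of_trace_conj_mul' {m k : Type*} [Fintype m] [Fintype k]
    (M : Matrix m k ℂ) (h : (Mᴴ * M).trace = 0) : M = 0 := by
  rw [trace_conj_mul'] at h
  have h' : (∑ i : m, ∑ j : k, Complex.normSq (M i j) : ℝ) = 0 := by exact_mod_cast h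
  ext i j
  have hnn : ∀ i ∈ Finset.univ, (0:ℝ) ≤ ∑ j : k, Complex.normSq (M i j) :=
    fun i _ => Finset.sum_nonneg fun j _ => Complex.normSq_nonneg _
  have h1 := (Finset.sum_eq_zero_iff_of_nonneg hnn).1 h' i (Finset.mem_univ i)
  have h2 := (Finset.sum_eq_zero_iff_of_nonneg (fun j _ => Complex.normSq_nonneg (M i j))).1 h1 j
    (Finset.mem_univ j)
  simpa using Complex.normSq_eq_zero.mp h2

/-! ### Commutation through powers -/

lemma comm_pow (X Y c : Matrix (Fin n) (Fin n) ℂ) (hc : Y * X = X * Y + c) :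
    ∀ q : ℕ, Y * X ^ q = X ^ q * Y + ∑ m ∈ Finset.range q, X ^ m * c * X ^ (q - 1 - m) := by
  intro q
  induction q with
  | zero => simp
  | succ q ih =>
    have e1 : ∀ m ∈ Finset.range q, X ^ m * c * X ^ (q - 1 - m) * X = X ^ m * c * X ^ (q - m) := by
      intro m hm
      rw [Finset.mem_range] at hm
      rw [mul_assoc, ← pow_succ]
      congr 2
      omega
    have e2 : ∀ m ∈ Finset.range (q+1),
        X ^ m * c * X ^ (q + 1 - 1 - m) = X ^ m * c * X ^ (q - m) := by
      intro m hm
      simp only [Nat.add_sub_cancel]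
    rw [Finset.sum_congr rfl e2, Finset.sum_range_succ, pow_succ, ← mul_assoc, ih, add_mul,
      Finset.sum_mul, Finset.sum_congr rfl e1, mul_assoc, hc, mul_add, Nat.sub_self, pow_zero,
      mul_one, ← mul_assoc, ← pow_succ]
    abel

variable (A B : Matrix (Fin n) (Fin n) ℂ) (x : Matrix (Fin n) (Fin 1) ℂ)
  (y : Matrix (Fin 1) (Fin n) ℂ)

lemma cyc (M : Matrix (Fin n) (Fin n) ℂ) : (y * M * x).trace = (M * (x * y)).trace := by
  calc (y * M * x).trace = (x * (y * M)).trace := trace_mul_comm _ _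
    _ = ((x * y) * M).trace := by rw [Matrix.mul_assoc]
    _ = (M * (x * y)).trace := trace_mul_comm _ _

lemma split_tr (M N : Matrix (Fin n) (Fin n) ℂ) :
    (y * (M * (x * y) * N) * x).trace = (y * M * x).trace * (y * N * x).trace := by
  have e : y * (M * (x * y) * N) * x = (y * M * x) * (y * N * x) := by
    simp only [Matrix.mul_assoc]
  rw [e, tr11_mul]

/-! ### The key vanishing lemma: `y · Bᵖ Aᵠ Bʳ · x = 0` -/

lemma key_lemma (hc : B * A = A * B + x * y) (p q r : ℕ) :
    (y * (B ^ p * A ^ q * B ^ r) * x).trace = 0 := by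
  have hxy : x * y = B * A - A * B := by rw [hc]; abel
  have L1 : ∀ q : ℕ, B * A ^ q
      = A ^ q * B + ∑ m ∈ Finset.range q, A ^ m * (x * y) * A ^ (q - 1 - m) :=
    comm_pow A B (x * y) hc
  have hc2 : A * B = B * A + -(x * y) := by rw [hc]; abel
  have L2 : ∀ p : ℕ, B ^ p * A
      = A * B ^ p - ∑ k ∈ Finset.range p, B ^ k * -(x * y) * B ^ (p - 1 - k) := by
    intro p
    rw [comm_pow B A (-(x * y)) hc2 p]
    abel
  suffices H : ∀ L p q r, p + q + r = L → (y * (B ^ p * A ^ q * B ^ r) * x).trace = 0 from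
    H (p + q + r) p q r rfl
  intro L
  induction L using Nat.strong_induction_on with
  | _ L IH =>
  have step1 : ∀ p q r, p + q + r = L →
      (y * (B ^ p * A ^ q * B ^ r) * x).trace = (y * (A ^ q * B ^ (p + r)) * x).trace := by
    intro p
    induction p with
    | zero => intro q r h; simp
    | succ p ihp =>
      intro q r h
      have e : B ^ (p+1) * A ^ q * B ^ r
          = B ^ p * A ^ q * B ^ (r+1)
            + ∑ m ∈ Finset.range q, (B ^ p * A ^ m) * (x * y) * (A ^ (q - 1 - m) * B ^ r) := by
        have e0 : B ^ (p+1) * A ^ q * B ^ r = B ^ p * (B * A ^ q) * B ^ r := by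
          rw [pow_succ]; noncomm_ring
        rw [e0, L1 q, mul_add, add_mul, Finset.mul_sum, Finset.sum_mul]
        congr 1
        · rw [_root_.pow_succ']; noncomm_ring
        · refine Finset.sum_congr rfl fun m hm => by noncomm_ring
      rw [e, Matrix.mul_add, Matrix.add_mul, trace_add]
      have hcor : (y * (∑ m ∈ Finset.range q,
          (B ^ p * A ^ m) * (x * y) * (A ^ (q - 1 - m) * B ^ r)) * x).trace = 0 := by
        rw [Matrix.mul_sum, Matrix.sum_mul, trace_sum]
        refine Finset.sum_eq_zero fun m hm => ?_
        rw [Finset.mem_range] at hm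
        rw [split_tr]
        have h1 : (y * (B ^ p * A ^ m) * x).trace = 0 := by
          have hb : B ^ p * A ^ m = B ^ p * A ^ m * B ^ 0 := by simp
          rw [hb]
          exact IH (p + m + 0) (by omega) p m 0 rfl
        rw [h1, zero_mul]
      rw [hcor, add_zero]
      have h2 : p + q + (r + 1) = L := by omega
      have h3 : p + (r + 1) = p + 1 + r := by omega
      rw [ihp q (r+1) h2, h3]
  have step2 : ∀ q j, q + j = L → (y * (A ^ q * B ^ j) * x).trace = 0 := by
    intro q j h
    rcases Nat.eq_zero_or_pos j with hj | hj
    · subst hj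
      rw [cyc, hxy, mul_sub, trace_sub]
      have e1 : A ^ q * B ^ 0 * (B * A) = A ^ q * B * A := by
        rw [pow_zero]; noncomm_ring
      have e2 : A ^ q * B ^ 0 * (A * B) = (A ^ q * A) * B := by
        rw [pow_zero]; noncomm_ring
      rw [e1, e2, trace_mul_comm (A ^ q * B) A, ← Matrix.mul_assoc, ← _root_.pow_succ',
        ← pow_succ, sub_self]
    rcases Nat.eq_zero_or_pos q with hq | hq
    · subst hq
      rw [cyc, hxy, mul_sub, trace_sub]
      have e1 : A ^ 0 * B ^ j * (B * A) = (B ^ j * B) * A := by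
        rw [pow_zero]; noncomm_ring
      have e2 : A ^ 0 * B ^ j * (A * B) = (B ^ j * A) * B := by
        rw [pow_zero]; noncomm_ring
      rw [e1, e2, trace_mul_comm (B ^ j * A) B, ← Matrix.mul_assoc, ← pow_succ,
        ← _root_.pow_succ', sub_self]
    have et1 : (A ^ q * B ^ j * (B * A)).trace = (A ^ (q+1) * B ^ (j+1)).trace := by
      have e1 : A ^ q * B ^ j * (B * A) = (A ^ q * B ^ (j+1)) * A := by
        rw [pow_succ]; noncomm_ring
      rw [e1, trace_mul_comm, ← Matrix.mul_assoc, ← _root_.pow_succ']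
    have e2 : A ^ q * B ^ j * (A * B) = A ^ q * (B ^ j * A) * B := by noncomm_ring
    have e3 : A ^ q * (B ^ j * A) * B
        = A ^ (q+1) * B ^ (j+1)
          - ∑ k ∈ Finset.range j, A ^ q * (B ^ k * -(x * y) * B ^ (j - 1 - k)) * B := by
      rw [L2 j, mul_sub, sub_mul, Finset.mul_sum, Finset.sum_mul]
      congr 1
      rw [pow_succ, pow_succ]; noncomm_ring
    have hcor : ∀ k ∈ Finset.range j,
        (A ^ q * (B ^ k * -(x * y) * B ^ (j - 1 - k)) * B).trace
          = -(y * (A ^ q * B ^ j) * x).trace := by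
      intro k hk
      rw [Finset.mem_range] at hk
      have hbk : B ^ (j - 1 - k) * B = B ^ (j - k) := by
        rw [← pow_succ]; congr 1; omega
      have e4 : A ^ q * (B ^ k * -(x * y) * B ^ (j - 1 - k)) * B
          = -((A ^ q * B ^ k * (x * y)) * (B ^ (j - 1 - k) * B)) := by
        noncomm_ring
      rw [e4, hbk, trace_neg, neg_inj, trace_mul_comm]
      have e5 : B ^ (j - k) * (A ^ q * B ^ k * (x * y))
          = (B ^ (j-k) * A ^ q * B ^ k) * (x * y) := by
        noncomm_ring
      rw [e5, ← cyc, step1 (j-k) q k (by omega)]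
      have e6 : j - k + k = j := by omega
      rw [e6]
    have hσ : (y * (A ^ q * B ^ j) * x).trace
        = (A ^ q * B ^ j * (B * A)).trace - (A ^ q * B ^ j * (A * B)).trace := by
      rw [cyc, hxy, mul_sub, trace_sub]
    have h2 : (A ^ q * B ^ j * (A * B)).trace
        = (A ^ (q+1) * B ^ (j+1)).trace + (j : ℂ) * (y * (A ^ q * B ^ j) * x).trace := by
      rw [e2, e3, trace_sub, trace_sum, Finset.sum_congr rfl hcor, Finset.sum_const,
        Finset.card_range, nsmul_eq_mul]
      ring
    have hz : (1 + (j:ℂ)) * (y * (A ^ q * B ^ j) * x).trace = 0 := by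
      linear_combination hσ + et1 - h2
    have hj0 : (1 + (j:ℂ)) ≠ 0 := by
      have := Nat.cast_add_one_ne_zero (R := ℂ) j
      rwa [add_comm] at this
    exact (mul_eq_zero.mp hz).resolve_left hj0
  intro p q r h
  rw [step1 p q r h]
  exact step2 q (p + r) (by omega)

/-! ### The orthogonal projection onto the invariant subspace -/

lemma toEuc_mul (M N : Matrix (Fin n) (Fin n) ℂ) :
    Matrix.toEuclideanLin (M * N)
      = (Matrix.toEuclideanLin M).comp (Matrix.toEuclideanLin N) := by
  refine LinearMap.ext fun v => ?_
  simp [Matrix.toEuclideanLin_apply, Matrix.mulVec_mulVec]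

lemma mulcol (M : Matrix (Fin n) (Fin n) ℂ) (x : Matrix (Fin n) (Fin 1) ℂ) (i : Fin n) :
    (M * x) i 0 = (M *ᵥ (fun k => x k 0)) i := by
  simp [Matrix.mul_apply, Matrix.mulVec, dotProduct]

lemma proj_exists
    (hyABx : ∀ i j : ℕ, y * (A ^ i * B ^ j) * x = 0)
    (hBinv : ∀ i j : ℕ, B * (A ^ i * B ^ j) * x = (A ^ i * B ^ (j+1)) * x) :
    ∃ P : Matrix (Fin n) (Fin n) ℂ,
      Pᴴ = P ∧ P * P = P ∧ P * x = x ∧ y * P = 0 ∧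
      A * P = P * (A * P) ∧ B * P = P * (B * P) := by
  classical
  set g : ℕ × ℕ → EuclideanSpace ℂ (Fin n) :=
    fun p => (WithLp.equiv 2 _).symm ((A ^ p.1 * B ^ p.2) *ᵥ (fun i => x i 0)) with hg
  set V : Submodule ℂ (EuclideanSpace ℂ (Fin n)) := Submodule.span ℂ (Set.range g) with hV
  set Pl : EuclideanSpace ℂ (Fin n) →ₗ[ℂ] EuclideanSpace ℂ (Fin n) :=
    ((V.subtypeL ∘L V.orthogonalProjectionOnto : _ →L[ℂ] _) :
      EuclideanSpace ℂ (Fin n) →ₗ[ℂ] EuclideanSpace ℂ (Fin n)) with hPl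
  set P : Matrix (Fin n) (Fin n) ℂ := Matrix.toEuclideanLin.symm Pl with hP
  have hPlin : Matrix.toEuclideanLin P = Pl := by
    rw [hP]; exact (Matrix.toEuclideanLin).apply_symm_apply Pl
  have hPapply : ∀ v, P *ᵥ (WithLp.equiv 2 _) v = (WithLp.equiv 2 _) (Pl v) := by
    intro v
    rw [← hPlin]
    rfl
  have hmemV : ∀ v, Pl v ∈ V := fun v => Submodule.coe_mem _
  have hfix : ∀ v ∈ V, Pl v = v := by
    intro v hv
    show (V.subtypeL ∘L V.orthogonalProjectionOnto) v = v
    simp [Submodule.starProjection_eq_self_iff.mpr hv]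
  have hAV : ∀ v ∈ V, Matrix.toEuclideanLin A v ∈ V := by
    intro v hv
    induction hv using Submodule.span_induction with
    | mem w hw =>
      obtain ⟨⟨i, j⟩, rfl⟩ := hw
      apply Submodule.subset_span
      refine ⟨(i+1, j), ?_⟩
      rw [hg]
      simp only [WithLp.equiv_symm_apply, Matrix.toEuclideanLin_apply_piLp_toLp, Matrix.mulVec_mulVec]
      congr 2
      rw [_root_.pow_succ', Matrix.mul_assoc]
    | zero => simp
    | add u w _ _ hu hw => rw [map_add]; exact V.add_mem hu hw
    | smul c u _ hu => rw [_root_.map_smul]; exact V.smul_mem c hu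
  have hBV : ∀ v ∈ V, Matrix.toEuclideanLin B v ∈ V := by
    intro v hv
    induction hv using Submodule.span_induction with
    | mem w hw =>
      obtain ⟨⟨i, j⟩, rfl⟩ := hw
      apply Submodule.subset_span
      refine ⟨(i, j+1), ?_⟩
      rw [hg]
      simp only [WithLp.equiv_symm_apply, Matrix.toEuclideanLin_apply_piLp_toLp, Matrix.mulVec_mulVec]
      congr 1
      funext k
      have h1 := congrArg (fun M => M k 0) (hBinv i j)
      rw [mulcol, mulcol] at h1
      exact h1.symm
    | zero => simp
    | add u w _ _ hu hw => rw [map_add]; exact V.add_mem hu hw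
    | smul c u _ hu => rw [_root_.map_smul]; exact V.smul_mem c hu
  have hker : ∀ v ∈ V, (∑ k, y 0 k * v k) = 0 := by
    intro v hv
    induction hv using Submodule.span_induction with
    | mem w hw =>
      obtain ⟨⟨i, j⟩, rfl⟩ := hw
      have h1 := congrArg (fun M => M 0 0) (hyABx i j)
      simp only [Matrix.zero_apply] at h1
      rw [← h1, Matrix.mul_assoc, Matrix.mul_apply]
      refine Finset.sum_congr rfl fun k _ => ?_
      rw [mulcol]
      rfl
    | zero => simp
    | add u w _ _ hu hw =>
      have hadd : ∀ k, (u + w) k = u k + w k := fun k => rfl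
      simp only [hadd, mul_add, Finset.sum_add_distrib, hu, hw, add_zero]
    | smul c u _ hu =>
      have hsm : ∀ k, (c • u) k = c * u k := fun k => rfl
      simp only [hsm, mul_left_comm, ← Finset.mul_sum, hu, mul_zero]
  refine ⟨P, ?_, ?_, ?_, ?_, ?_, ?_⟩
  · have hsym := V.starProjection_isSymmetric
    have hadj : Pl = LinearMap.adjoint Pl := by
      rw [LinearMap.eq_adjoint_iff]
      intro u v
      exact hsym u v
    rw [← hPlin] at hadj
    calc Pᴴ = Matrix.toEuclideanLin.symm (Matrix.toEuclideanLin Pᴴ) :=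
          (Matrix.toEuclideanLin.symm_apply_apply _).symm
      _ = Matrix.toEuclideanLin.symm (LinearMap.adjoint (Matrix.toEuclideanLin P)) := by
          rw [Matrix.toEuclideanLin_conjTranspose_eq_adjoint]
      _ = Matrix.toEuclideanLin.symm (Matrix.toEuclideanLin P) := by rw [← hadj]
      _ = P := Matrix.toEuclideanLin.symm_apply_apply _
  · apply Matrix.toEuclideanLin.injective
    rw [toEuc_mul, hPlin]
    refine LinearMap.ext fun v => ?_
    exact hfix (Pl v) (hmemV v)
  · ext i k
    have hk : k = 0 := Subsingleton.elim _ _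
    subst hk
    rw [mulcol]
    have hx0V : ((WithLp.equiv 2 _).symm (fun i => x i 0) : EuclideanSpace ℂ (Fin n)) ∈ V := by
      apply Submodule.subset_span
      exact ⟨(0, 0), by simp [hg]⟩
    have hfx := hfix _ hx0V
    calc (P *ᵥ fun k => x k 0) i
        = ((WithLp.equiv 2 _) (Pl ((WithLp.equiv 2 _).symm (fun k => x k 0)))) i := by
          rw [← hPapply]; rfl
      _ = x i 0 := by rw [hfx]; rfl
  · ext k j
    have hk : k = 0 := Subsingleton.elim _ _
    subst hk
    simp only [Matrix.mul_apply, Matrix.zero_apply]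
    have hcol : ∀ k, P k j
        = (Pl ((WithLp.equiv 2 _).symm (Pi.single j 1)) : EuclideanSpace ℂ (Fin n)) k := by
      intro k
      have h2 : (P *ᵥ (Pi.single j 1)) k = P k j := by
        simp [Matrix.mulVec_single]
      rw [← h2]
      have h3 := congrArg (fun w => w k) (hPapply ((WithLp.equiv 2 _).symm (Pi.single j 1)))
      simpa using h3
    calc ∑ k, y 0 k * P k j
        = ∑ k, y 0 k * (Pl ((WithLp.equiv 2 _).symm (Pi.single j 1))) k := by
          refine Finset.sum_congr rfl fun k _ => by rw [hcol]
      _ = 0 := hker _ (hmemV _)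
  · apply Matrix.toEuclideanLin.injective
    rw [toEuc_mul, toEuc_mul, toEuc_mul, hPlin]
    refine LinearMap.ext fun v => ?_
    simp only [LinearMap.comp_apply]
    exact (hfix _ (hAV _ (hmemV v))).symm
  · apply Matrix.toEuclideanLin.injective
    rw [toEuc_mul, toEuc_mul, toEuc_mul, hPlin]
    refine LinearMap.ext fun v => ?_
    simp only [LinearMap.comp_apply]
    exact (hfix _ (hBV _ (hmemV v))).symm

/-! ### Trace evaluations -/

lemma comm_trace_eval (A P : Matrix (Fin n) (Fin n) ℂ)
    (hPH : Pᴴ = P) (hP2 : P * P = P) (hAP : A * P = P * (A * P)) :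
    ((1 - P) * (A * Aᴴ - Aᴴ * A)).trace = -(((P * A * (1-P))ᴴ * (P * A * (1-P))).trace) := by
  set Q : Matrix (Fin n) (Fin n) ℂ := 1 - P with hQ
  have hQH : Qᴴ = Q := by
    rw [hQ, conjTranspose_sub, hPH, conjTranspose_one]
  have hQ2 : Q * Q = Q := by
    rw [hQ]
    rw [Matrix.sub_mul, Matrix.one_mul, Matrix.mul_sub, Matrix.mul_one, hP2]
    abel
  have hQAP : Q * A * P = 0 := by
    rw [hQ, Matrix.sub_mul, Matrix.one_mul, Matrix.sub_mul, Matrix.mul_assoc, ← hAP, sub_self]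
  have key1 : Q * A = Q * A * Q := by
    have h0 : Q * A * Q = Q * A - Q * A * P := by
      rw [hQ]; noncomm_ring
    rw [h0, hQAP, sub_zero]
  have e1 : (Q * (A * Aᴴ)).trace = (Q * Aᴴ * (Q * A)).trace := by
    calc (Q * (A * Aᴴ)).trace = ((Q * A) * Aᴴ).trace := by congr 1; noncomm_ring
      _ = ((Q * A * Q) * Aᴴ).trace := by rw [← key1]
      _ = (Aᴴ * (Q * A * Q)).trace := trace_mul_comm _ _
      _ = ((Aᴴ * (Q * A)) * Q).trace := by congr 1; noncomm_ring
      _ = (Q * (Aᴴ * (Q * A))).trace := trace_mul_comm _ _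
      _ = (Q * Aᴴ * (Q * A)).trace := by congr 1; noncomm_ring
  have e2 : ((P * A * Q)ᴴ * (P * A * Q)).trace
      = (Q * Aᴴ * A).trace - (Q * Aᴴ * (Q * A)).trace := by
    have h1 : (P * A * Q)ᴴ = Q * Aᴴ * P := by
      rw [conjTranspose_mul, conjTranspose_mul, hQH, hPH, Matrix.mul_assoc]
    have h2 : (Q * Aᴴ * P) * (P * A * Q) = Q * Aᴴ * P * A * Q := by
      have h2' : (Q * Aᴴ * P) * (P * A * Q) = Q * Aᴴ * (P * P) * A * Q := by noncomm_ring
      rw [h2', hP2]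
    rw [h1, h2]
    have h3 : (Q * Aᴴ * P * A * Q).trace = (Q * (Q * Aᴴ * P * A)).trace :=
      trace_mul_comm (Q * Aᴴ * P * A) Q
    have h4 : Q * (Q * Aᴴ * P * A) = (Q * Q) * Aᴴ * P * A := by noncomm_ring
    rw [h3, h4, hQ2]
    have h5 : Q * Aᴴ * P * A = Q * Aᴴ * A - Q * Aᴴ * (Q * A) := by
      have hPQ : P = 1 - Q := by rw [hQ]; abel
      rw [hPQ]; noncomm_ring
    rw [h5, trace_sub]
  have e0 : (Q * (Aᴴ * A)).trace = (Q * Aᴴ * A).trace := by congr 1; noncomm_ring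
  rw [Matrix.mul_sub, trace_sub, e1, e0]
  linear_combination e2

lemma comm_normal_trace (A B : Matrix (Fin n) (Fin n) ℂ) (hAB : A * B = B * A) :
    ((A * Aᴴ - Aᴴ * A) * (B * Bᴴ - Bᴴ * B)).trace
      = ((A * Bᴴ - Bᴴ * A)ᴴ * (A * Bᴴ - Bᴴ * A)).trace := by
  have hD : (A * Bᴴ - Bᴴ * A)ᴴ = B * Aᴴ - Aᴴ * B := by
    rw [conjTranspose_sub, conjTranspose_mul, conjTranspose_mul, conjTranspose_conjTranspose]
  rw [hD]
  have eq1 : ((B * Aᴴ) * (A * Bᴴ)).trace = ((Aᴴ * A) * (Bᴴ * B)).trace := by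
    have h1 : (B * Aᴴ) * (A * Bᴴ) = B * (Aᴴ * A * Bᴴ) := by noncomm_ring
    have h2 : (Aᴴ * A * Bᴴ) * B = (Aᴴ * A) * (Bᴴ * B) := by noncomm_ring
    rw [h1, trace_mul_comm, h2]
  have eq2 : ((B * Aᴴ) * (Bᴴ * A)).trace = ((A * Aᴴ) * (Bᴴ * B)).trace := by
    have h1 : (B * Aᴴ) * (Bᴴ * A) = B * (Aᴴ * Bᴴ * A) := by noncomm_ring
    rw [h1, trace_mul_comm]
    have h2 : (Aᴴ * Bᴴ * A) * B = (Aᴴ * Bᴴ) * (A * B) := by noncomm_ring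
    rw [h2, hAB]
    have h3 : (Aᴴ * Bᴴ) * (B * A) = (Aᴴ * (Bᴴ * B)) * A := by noncomm_ring
    rw [h3, trace_mul_comm]
    have h4 : A * (Aᴴ * (Bᴴ * B)) = (A * Aᴴ) * (Bᴴ * B) := by noncomm_ring
    rw [h4]
  have eq3 : ((Aᴴ * B) * (A * Bᴴ)).trace = ((Aᴴ * A) * (B * Bᴴ)).trace := by
    have h1 : (Aᴴ * B) * (A * Bᴴ) = Aᴴ * ((B * A) * Bᴴ) := by noncomm_ring
    rw [h1, ← hAB]
    have h2 : Aᴴ * ((A * B) * Bᴴ) = (Aᴴ * A) * (B * Bᴴ) := by noncomm_ring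
    rw [h2]
  have eq4 : ((Aᴴ * B) * (Bᴴ * A)).trace = ((A * Aᴴ) * (B * Bᴴ)).trace := by
    have h1 : (Aᴴ * B) * (Bᴴ * A) = (Aᴴ * (B * Bᴴ)) * A := by noncomm_ring
    rw [h1, trace_mul_comm]
    have h2 : A * (Aᴴ * (B * Bᴴ)) = (A * Aᴴ) * (B * Bᴴ) := by noncomm_ring
    rw [h2]
  rw [Matrix.sub_mul, Matrix.mul_sub, Matrix.mul_sub, Matrix.sub_mul, Matrix.mul_sub,
    Matrix.mul_sub, trace_sub, trace_sub, trace_sub, trace_sub, trace_sub, trace_sub]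
  rw [eq1, eq2, eq3, eq4]
  ring

end Stmt1Aux

end Stmt1Aux


open Stmt1Aux in
/-- At level `t = 0`, solutions of the moment map equations consist of
commuting normal matrices with `x = 0` and `y = 0`. -/
theorem stmt_1 (n : ℕ)
    (A B : Matrix (Fin n) (Fin n) ℂ)
    (x : Matrix (Fin n) (Fin 1) ℂ) (y : Matrix (Fin 1) (Fin n) ℂ)
    (hreal : A * Aᴴ - Aᴴ * A + (B * Bᴴ - Bᴴ * B) + x * xᴴ - yᴴ * y = 0)
    (hcplx : A * B - B * A + x * y = 0) :
    x = 0 ∧ y = 0 ∧ A * B = B * A ∧ A * Aᴴ = Aᴴ * A ∧ B * Bᴴ = Bᴴ * B := by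
  have hc : B * A = A * B + x * y := by
    have h : A * B + x * y - B * A = 0 := by rw [← hcplx]; abel
    exact (sub_eq_zero.mp h).symm
  have hyABx : ∀ i j : ℕ, y * (A ^ i * B ^ j) * x = 0 := by
    intro i j
    have h := key_lemma A B x y hc 0 i j
    rw [pow_zero, Matrix.one_mul] at h
    exact eq0_of_tr11 _ h
  have hBinv : ∀ i j : ℕ, B * (A ^ i * B ^ j) * x = (A ^ i * B ^ (j+1)) * x := by
    intro i j
    have h1 : B * (A ^ i * B ^ j) * x = (B * A ^ i) * (B ^ j * x) := by
      simp only [Matrix.mul_assoc]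
    rw [h1, comm_pow A B (x * y) hc i, Matrix.add_mul, Matrix.sum_mul]
    have h2 : ∀ m ∈ Finset.range i, (A ^ m * (x * y) * A ^ (i - 1 - m)) * (B ^ j * x) = 0 := by
      intro m hm
      have hz := hyABx (i - 1 - m) j
      have h3 : (A ^ m * (x * y) * A ^ (i - 1 - m)) * (B ^ j * x)
          = (A ^ m * x) * (y * (A ^ (i - 1 - m) * B ^ j) * x) := by
        simp only [Matrix.mul_assoc]
      rw [h3, hz, Matrix.mul_zero]
    rw [Finset.sum_eq_zero h2, add_zero]
    have h4 : (A ^ i * B) * (B ^ j * x) = (A ^ i * B ^ (j+1)) * x := by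
      rw [_root_.pow_succ']
      simp only [Matrix.mul_assoc]
    rw [h4]
  obtain ⟨P, hPH, hP2, hPx, hyP, hAP, hBP⟩ := proj_exists A B x y hyABx hBinv
  -- y = 0
  have hy0 : y = 0 := by
    have h0 : ((1 - P) * (A * Aᴴ - Aᴴ * A + (B * Bᴴ - Bᴴ * B) + x * xᴴ - yᴴ * y)).trace = 0 := by
      rw [hreal, Matrix.mul_zero, trace_zero]
    have hQx : (1 - P) * x = 0 := by
      rw [Matrix.sub_mul, Matrix.one_mul, hPx, sub_self]
    have hxterm : ((1 - P) * (x * xᴴ)).trace = 0 := by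
      rw [← Matrix.mul_assoc, hQx, Matrix.zero_mul, trace_zero]
    have hyQ : y * (1 - P) = y := by
      rw [Matrix.mul_sub, Matrix.mul_one, hyP, sub_zero]
    have hyterm : ((1 - P) * (yᴴ * y)).trace = ((yᴴ)ᴴ * yᴴ).trace := by
      calc ((1 - P) * (yᴴ * y)).trace = (((1-P) * yᴴ) * y).trace := by rw [Matrix.mul_assoc]
        _ = (y * ((1-P) * yᴴ)).trace := trace_mul_comm _ _
        _ = ((y * (1-P)) * yᴴ).trace := by rw [Matrix.mul_assoc]
        _ = (y * yᴴ).trace := by rw [hyQ]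
        _ = ((yᴴ)ᴴ * yᴴ).trace := by rw [conjTranspose_conjTranspose]
    rw [Matrix.mul_sub, Matrix.mul_add, Matrix.mul_add, trace_sub, trace_add, trace_add,
      comm_trace_eval A P hPH hP2 hAP, comm_trace_eval B P hPH hP2 hBP, hxterm, hyterm,
      trace_conj_mul', trace_conj_mul', trace_conj_mul'] at h0
    have hr : (∑ i, ∑ j, Complex.normSq ((P * A * (1-P)) i j) : ℝ)
        + (∑ i, ∑ j, Complex.normSq ((P * B * (1-P)) i j) : ℝ)
        + (∑ i, ∑ j, Complex.normSq ((yᴴ) i j) : ℝ) = 0 := by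
      have h1 : (((∑ i, ∑ j, Complex.normSq ((P * A * (1-P)) i j) : ℝ)
          + (∑ i, ∑ j, Complex.normSq ((P * B * (1-P)) i j) : ℝ)
          + (∑ i, ∑ j, Complex.normSq ((yᴴ) i j) : ℝ) : ℝ) : ℂ) = 0 := by
        rw [Complex.ofReal_add, Complex.ofReal_add]
        linear_combination -h0
      exact_mod_cast h1
    have hry : (∑ i, ∑ j, Complex.normSq ((yᴴ) i j) : ℝ) = 0 := by
      have n1 := trace_conj_nonneg (P * A * (1-P))
      have n2 := trace_conj_nonneg (P * B * (1-P))
      have n3 := trace_conj_nonneg (yᴴ)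
      linarith
    have hyH : yᴴ = 0 := by
      apply eq0_of_trace_conj_mul'
      rw [trace_conj_mul', hry]
      norm_num
    calc y = (yᴴ)ᴴ := (conjTranspose_conjTranspose y).symm
      _ = 0 := by rw [hyH, conjTranspose_zero]
  -- x = 0
  have hx0 : x = 0 := by
    have h1 : (A * Aᴴ - Aᴴ * A + (B * Bᴴ - Bᴴ * B) + x * xᴴ - yᴴ * y).trace = 0 := by
      rw [hreal, trace_zero]
    rw [hy0] at h1
    rw [trace_sub, trace_add, trace_add, trace_sub, trace_sub] at h1
    have c1 : (A * Aᴴ).trace = (Aᴴ * A).trace := trace_mul_comm _ _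
    have c2 : (B * Bᴴ).trace = (Bᴴ * B).trace := trace_mul_comm _ _
    have c3 : (((0 : Matrix (Fin 1) (Fin n) ℂ))ᴴ * (0 : Matrix (Fin 1) (Fin n) ℂ)).trace = 0 := by
      simp
    have c4 : (x * xᴴ).trace = (xᴴ * x).trace := trace_mul_comm _ _
    have h2 : (xᴴ * x).trace = 0 := by
      linear_combination h1 - c1 - c2 - c4 + c3
    exact eq0_of_trace_conj_mul' x h2
  -- A B commute
  have hAB : A * B = B * A := by
    have h := hcplx
    rw [hx0, Matrix.zero_mul, add_zero] at h
    exact sub_eq_zero.mp h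
  refine ⟨hx0, hy0, hAB, ?_, ?_⟩
  -- normality
  all_goals {
    have hsum : A * Aᴴ - Aᴴ * A + (B * Bᴴ - Bᴴ * B) = 0 := by
      have h := hreal
      rw [hx0, hy0] at h
      simpa using h
    have hCB : B * Bᴴ - Bᴴ * B = -(A * Aᴴ - Aᴴ * A) := by
      have h : B * Bᴴ - Bᴴ * B + (A * Aᴴ - Aᴴ * A) = 0 := by
        rw [← hsum]; abel
      exact eq_neg_of_add_eq_zero_left h
    have hid := comm_normal_trace A B hAB
    rw [hCB] at hid
    have hCH : (A * Aᴴ - Aᴴ * A)ᴴ = A * Aᴴ - Aᴴ * A := by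
      rw [conjTranspose_sub, conjTranspose_mul, conjTranspose_mul, conjTranspose_conjTranspose]
    have hCC : ((A * Aᴴ - Aᴴ * A) * -(A * Aᴴ - Aᴴ * A)).trace
        = -(((A * Aᴴ - Aᴴ * A)ᴴ * (A * Aᴴ - Aᴴ * A)).trace) := by
      rw [Matrix.mul_neg, trace_neg, hCH]
    rw [hCC, trace_conj_mul', trace_conj_mul'] at hid
    have hr : (∑ i, ∑ j, Complex.normSq ((A * Aᴴ - Aᴴ * A) i j) : ℝ)
        + (∑ i, ∑ j, Complex.normSq ((A * Bᴴ - Bᴴ * A) i j) : ℝ) = 0 := by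
      have h1 : (((∑ i, ∑ j, Complex.normSq ((A * Aᴴ - Aᴴ * A) i j) : ℝ)
          + (∑ i, ∑ j, Complex.normSq ((A * Bᴴ - Bᴴ * A) i j) : ℝ) : ℝ) : ℂ) = 0 := by
        rw [Complex.ofReal_add]
        linear_combination -hid
      exact_mod_cast h1
    have hrc : (∑ i, ∑ j, Complex.normSq ((A * Aᴴ - Aᴴ * A) i j) : ℝ) = 0 := by
      have n1 := trace_conj_nonneg (A * Aᴴ - Aᴴ * A)
      have n2 := trace_conj_nonneg (A * Bᴴ - Bᴴ * A)
      linarith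
    have hC0 : A * Aᴴ - Aᴴ * A = 0 := by
      apply eq0_of_trace_conj_mul'
      rw [trace_conj_mul', hrc]
      norm_num
    first
    | exact sub_eq_zero.mp hC0
    | { have hB0 : B * Bᴴ - Bᴴ * B = 0 := by rw [hCB, hC0, neg_zero]
        exact sub_eq_zero.mp hB0 }
  }
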